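/- arXiv:1510.08906 — 2 statements merged into one kernel-verified Lean document; each statement's English description precedes it below -/
import Mathlib

section
/- For all 1 ≤ i ≤ j ≤ H and all s ∈ S, the variance of the value function equals the propagated sum of local variances: 𝒱_{i:j}(s) = Σ_{t=i}^{j} (P_{i:t−1} σ²_{t:j})(s). -/
open Finset

/-- The operator `(P_t f)(s) = ∑_{s'} p_t(s,s') f(s')` induced by transition matrices `p`. -/
noncomputable def Pop {S : Type*} [Fintype S] (p : ℕ → S → S → ℝ) (t : ℕ) (f : S → ℝ) (s : S) : ℝ :=
  ∑ s', p t s s' * f s'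

/-- The multi-step operator `P_{i:j} = P_i P_{i+1} ⋯ P_j` (identity when `j < i`). -/
noncomputable def PC {S : Type*} [Fintype S] (p : ℕ → S → S → ℝ) (i j : ℕ) (f : S → ℝ) : S → ℝ :=
  (List.range' i (j + 1 - i)).foldr (fun t g => Pop p t g) f

/-- The value function: `V_{j:j} = r_j`, `V_{i:j} = r_i + P_i V_{i+1:j}` for `i < j`. -/
noncomputable def Vf {S : Type*} [Fintype S] (p : ℕ → S → S → ℝ) (r : ℕ → S → ℝ)
    (i j : ℕ) : S → ℝ :=
  if _h : i < j then fun s => r i s + Pop p i (Vf p r (i + 1) j) s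
  else r j
termination_by j - i
decreasing_by omega

/-- The trajectory `s_i = s, s_{i+1} = σ 0, …, s_{i+k} = σ (k-1)` as a function of time
(states outside `{i, …, i+k}` are irrelevant and set to `s`, resp. `σ`'s last values). -/
def pathFn {S : Type*} (s : S) (i : ℕ) {k : ℕ} (σ : Fin k → S) (t : ℕ) : S :=
  if h : i < t ∧ t - i - 1 < k then σ ⟨t - i - 1, h.2⟩ else s

/-- Expectation over trajectories of the Markov chain started in state `s` at time `i`,
running until time `j`: `E_{s,i:j}[g] = ∑_{s_{i+1},…,s_j} (∏_{t=i}^{j-1} p_t(s_t,s_{t+1})) g(s_i,…,s_j)`. -/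
noncomputable def Ex {S : Type*} [Fintype S] (p : ℕ → S → S → ℝ) (i j : ℕ) (s : S)
    (g : (ℕ → S) → ℝ) : ℝ :=
  ∑ σ : Fin (j - i) → S,
    (∏ t ∈ Finset.Ico i j, p t (pathFn s i σ t) (pathFn s i σ (t + 1))) * g (pathFn s i σ)

/-- The local variance of the value function:
`σ²_{i:j}(s) = ∑_{s'} p_i(s,s') (V_{i+1:j}(s') − (P_i V_{i+1:j})(s))²` for `i < j`, and `0` else. -/
noncomputable def sigmaSq {S : Type*} [Fintype S] (p : ℕ → S → S → ℝ) (r : ℕ → S → ℝ)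
    (i j : ℕ) (s : S) : ℝ :=
  if i < j then
    ∑ s', p i s s' * (Vf p r (i + 1) j s' - Pop p i (Vf p r (i + 1) j) s) ^ 2
  else 0

/-- The variance of the value function:
`𝒱_{i:j}(s) = E_{s,i:j}[(∑_{t=i}^j r_t(s_t) − V_{i:j}(s))²]`. -/
noncomputable def VarV {S : Type*} [Fintype S] (p : ℕ → S → S → ℝ) (r : ℕ → S → ℝ)
    (i j : ℕ) (s : S) : ℝ :=
  Ex p i j s (fun τ => ((∑ t ∈ Finset.Icc i j, r t (τ t)) - Vf p r i j s) ^ 2)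

lemma pathFn_le {S : Type*} (s : S) (i : ℕ) {k : ℕ} (σ : Fin k → S) (t : ℕ) (h : t ≤ i) :
    pathFn s i σ t = s := dif_neg (by omega)

lemma pathFn_cons {S : Type*} (s s' : S) (i : ℕ) {n : ℕ} (σ : Fin n → S) (t : ℕ)
    (h1 : i < t) (h2 : t ≤ i + 1 + n) :
    pathFn s i (Fin.cons s' σ) t = pathFn s' (i + 1) σ t := by
  unfold pathFn
  rcases Nat.lt_or_ge (i + 1) t with h | h
  · have hA : i < t ∧ t - i - 1 < n + 1 := ⟨h1, by omega⟩
    have hB : i + 1 < t ∧ t - (i + 1) - 1 < n := ⟨h, by omega⟩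
    rw [dif_pos hA, dif_pos hB]
    have : (⟨t - i - 1, hA.2⟩ : Fin (n + 1)) = Fin.succ ⟨t - (i + 1) - 1, hB.2⟩ := by
      ext; simp; omega
    rw [this, Fin.cons_succ]
  · have ht : t = i + 1 := by omega
    subst ht
    have hA : i < i + 1 ∧ i + 1 - i - 1 < n + 1 := ⟨by omega, by omega⟩
    rw [dif_pos hA, dif_neg (by omega)]
    have : (⟨i + 1 - i - 1, hA.2⟩ : Fin (n + 1)) = 0 := by ext; simp
    rw [this, Fin.cons_zero]

lemma Ex_base {S : Type*} [Fintype S] (p : ℕ → S → S → ℝ) (i : ℕ) (s : S) (g : (ℕ → S) → ℝ) :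
    Ex p i i s g = g (fun _ => s) := by
  have h1 : ∀ σ : Fin (i - i) → S, pathFn s i σ = fun _ => s :=
    fun σ => funext fun t => dif_neg (by omega)
  simp [Ex, h1, Finset.Ico_self]

lemma Ex_succ {S : Type*} [Fintype S] (p : ℕ → S → S → ℝ) (r : ℕ → S → ℝ)
    (i j : ℕ) (hij : i < j) (s : S) (φ : ℝ → ℝ) :
    Ex p i j s (fun τ => φ (∑ t ∈ Finset.Icc i j, r t (τ t))) =
      ∑ s', p i s s' *
        Ex p (i + 1) j s' (fun τ => φ (r i s + ∑ t ∈ Finset.Icc (i + 1) j, r t (τ t))) := by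
  obtain ⟨n, hn⟩ : ∃ n, j - i = n + 1 := ⟨j - i - 1, by omega⟩
  have hn' : j - (i + 1) = n := by omega
  unfold Ex
  rw [hn, hn']
  rw [← Equiv.sum_comp (Fin.consEquiv (fun _ : Fin (n + 1) => S))]
  rw [Fintype.sum_prod_type]
  refine Finset.sum_congr rfl fun s' _ => ?_
  rw [Finset.mul_sum]
  refine Finset.sum_congr rfl fun σ' _ => ?_
  have hAB : ∀ t, i + 1 ≤ t → t ≤ j → pathFn s i (Fin.cons s' σ' : Fin (n+1) → S) t
      = pathFn s' (i + 1) σ' t := fun t ht1 ht2 =>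
    pathFn_cons s s' i σ' t (by omega) (by omega)
  have hprod : (∏ t ∈ Finset.Ico i j,
        p t (pathFn s i (Fin.consEquiv (fun _ : Fin (n+1) => S) (s', σ')) t)
          (pathFn s i (Fin.consEquiv (fun _ : Fin (n+1) => S) (s', σ')) (t + 1)))
      = p i s s' * ∏ t ∈ Finset.Ico (i + 1) j,
          p t (pathFn s' (i + 1) σ' t) (pathFn s' (i + 1) σ' (t + 1)) := by
    show (∏ t ∈ Finset.Ico i j,
        p t (pathFn s i (Fin.cons s' σ' : Fin (n+1) → S) t)
          (pathFn s i (Fin.cons s' σ' : Fin (n+1) → S) (t + 1))) = _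
    rw [Finset.prod_eq_prod_Ico_succ_bot hij]
    congr 1
    · rw [pathFn_le s i _ i le_rfl, hAB (i+1) le_rfl (by omega),
        pathFn_le s' (i+1) _ (i+1) le_rfl]
    · refine Finset.prod_congr rfl fun t ht => ?_
      rw [Finset.mem_Ico] at ht
      rw [hAB t ht.1 (by omega), hAB (t+1) (by omega) (by omega)]
  have hsum : (∑ t ∈ Finset.Icc i j,
        r t (pathFn s i (Fin.consEquiv (fun _ : Fin (n+1) => S) (s', σ')) t))
      = r i s + ∑ t ∈ Finset.Icc (i + 1) j, r t (pathFn s' (i + 1) σ' t) := by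
    show (∑ t ∈ Finset.Icc i j, r t (pathFn s i (Fin.cons s' σ' : Fin (n+1) → S) t)) = _
    rw [← Finset.Ico_add_one_right_eq_Icc, Finset.sum_eq_sum_Ico_succ_bot (by omega), Finset.Ico_add_one_right_eq_Icc]
    congr 1
    · rw [pathFn_le s i _ i le_rfl]
    · refine Finset.sum_congr rfl fun t ht => ?_
      rw [Finset.mem_Icc] at ht
      rw [hAB t ht.1 ht.2]
  simp only [hprod, hsum]
  ring

lemma Ex_add {S : Type*} [Fintype S] (p : ℕ → S → S → ℝ) (i j : ℕ) (s : S)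
    (g₁ g₂ : (ℕ → S) → ℝ) :
    Ex p i j s (fun τ => g₁ τ + g₂ τ) = Ex p i j s g₁ + Ex p i j s g₂ := by
  unfold Ex
  rw [← Finset.sum_add_distrib]
  exact Finset.sum_congr rfl fun σ _ => by ring

lemma Ex_const_mul {S : Type*} [Fintype S] (p : ℕ → S → S → ℝ) (i j : ℕ) (s : S)
    (c : ℝ) (g : (ℕ → S) → ℝ) :
    Ex p i j s (fun τ => c * g τ) = c * Ex p i j s g := by
  unfold Ex
  rw [Finset.mul_sum]
  exact Finset.sum_congr rfl fun σ _ => by ring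

lemma Ex_one {S : Type*} [Fintype S] (H : ℕ) (p : ℕ → S → S → ℝ) (r : ℕ → S → ℝ)
    (hp_sum : ∀ t, 1 ≤ t → t ≤ H → ∀ s, ∑ s', p t s s' = 1) :
    ∀ n i j s, 1 ≤ i → i + n = j → j ≤ H → Ex p i j s (fun _ => (1 : ℝ)) = 1 := by
  intro n
  induction n with
  | zero =>
    intro i j s h1 h2 h3
    have : j = i := by omega
    subst this
    rw [Ex_base]
  | succ n IH =>
    intro i j s h1 h2 h3
    have hij : i < j := by omega
    have h := Ex_succ p r i j hij s (fun _ => (1 : ℝ))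
    rw [h]
    have : ∀ s' : S, Ex p (i + 1) j s' (fun _ => (1:ℝ)) = 1 :=
      fun s' => IH (i + 1) j s' (by omega) (by omega) h3
    simp only [this, mul_one]
    exact hp_sum i h1 (by omega) s

lemma Ex_const {S : Type*} [Fintype S] (H : ℕ) (p : ℕ → S → S → ℝ) (r : ℕ → S → ℝ)
    (hp_sum : ∀ t, 1 ≤ t → t ≤ H → ∀ s, ∑ s', p t s s' = 1)
    (i j : ℕ) (h1 : 1 ≤ i) (h2 : i ≤ j) (h3 : j ≤ H) (s : S) (c : ℝ) :
    Ex p i j s (fun _ => c) = c := by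
  have h := Ex_const_mul p i j s c (fun _ => (1 : ℝ))
  simp only [mul_one] at h
  rw [h, Ex_one H p r hp_sum (j - i) i j s h1 (by omega) h3, mul_one]

lemma Ex_mean {S : Type*} [Fintype S] (H : ℕ) (p : ℕ → S → S → ℝ) (r : ℕ → S → ℝ)
    (hp_sum : ∀ t, 1 ≤ t → t ≤ H → ∀ s, ∑ s', p t s s' = 1) :
    ∀ n i j s, 1 ≤ i → i + n = j → j ≤ H →
      Ex p i j s (fun τ => ∑ t ∈ Finset.Icc i j, r t (τ t)) = Vf p r i j s := by
  intro n
  induction n with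
  | zero =>
    intro i j s h1 h2 h3
    have : j = i := by omega
    subst this
    rw [Ex_base, Vf]
    simp
  | succ n IH =>
    intro i j s h1 h2 h3
    have hij : i < j := by omega
    have h := Ex_succ p r i j hij s id
    simp only [id] at h
    rw [h]
    have key : ∀ s' : S, Ex p (i + 1) j s'
        (fun τ => r i s + ∑ t ∈ Finset.Icc (i + 1) j, r t (τ t))
        = r i s + Vf p r (i + 1) j s' := by
      intro s'
      rw [Ex_add p (i+1) j s' (fun _ => r i s) (fun τ => ∑ t ∈ Finset.Icc (i + 1) j, r t (τ t)),
        Ex_const H p r hp_sum (i+1) j (by omega) (by omega) h3,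
        IH (i + 1) j s' (by omega) (by omega) h3]
    simp only [key, mul_add]
    rw [Finset.sum_add_distrib, ← Finset.sum_mul, hp_sum i h1 (by omega) s, one_mul]
    conv_rhs => rw [Vf]
    rw [dif_pos hij]
    rfl

lemma PC_nil {S : Type*} [Fintype S] (p : ℕ → S → S → ℝ) (i : ℕ) (h : 1 ≤ i) (f : S → ℝ) :
    PC p i (i - 1) f = f := by
  unfold PC
  rw [show i - 1 + 1 - i = 0 from by omega]
  rfl

lemma PC_cons {S : Type*} [Fintype S] (p : ℕ → S → S → ℝ) (i t : ℕ) (h : i < t) (f : S → ℝ) :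
    PC p i (t - 1) f = Pop p i (PC p (i + 1) (t - 1) f) := by
  unfold PC
  rw [show t - 1 + 1 - i = (t - 1 + 1 - (i + 1)) + 1 from by omega]
  rfl

lemma VarV_rec {S : Type*} [Fintype S] (H : ℕ) (p : ℕ → S → S → ℝ) (r : ℕ → S → ℝ)
    (hp_sum : ∀ t, 1 ≤ t → t ≤ H → ∀ s, ∑ s', p t s s' = 1)
    (i j : ℕ) (h1 : 1 ≤ i) (hij : i < j) (h3 : j ≤ H) (s : S) :
    VarV p r i j s = sigmaSq p r i j s + Pop p i (VarV p r (i + 1) j) s := by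
  have hV : Vf p r i j s = r i s + Pop p i (Vf p r (i + 1) j) s := by
    conv_lhs => rw [Vf]
    rw [dif_pos hij]
  set m := Pop p i (Vf p r (i + 1) j) s with hm
  have h := Ex_succ p r i j hij s (fun x => (x - Vf p r i j s) ^ 2)
  unfold VarV
  rw [h]
  have key : ∀ s' : S, Ex p (i + 1) j s'
      (fun τ => (r i s + (∑ t ∈ Finset.Icc (i + 1) j, r t (τ t)) - Vf p r i j s) ^ 2)
      = VarV p r (i + 1) j s' + (Vf p r (i + 1) j s' - m) ^ 2 := by
    intro s'
    set W := Vf p r (i + 1) j s' with hW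
    have e1 : (fun τ : ℕ → S =>
        (r i s + (∑ t ∈ Finset.Icc (i + 1) j, r t (τ t)) - Vf p r i j s) ^ 2)
        = fun τ => ((∑ t ∈ Finset.Icc (i + 1) j, r t (τ t)) - W) ^ 2
            + ((2 * (W - m)) * (∑ t ∈ Finset.Icc (i + 1) j, r t (τ t))
              + ((W - m) ^ 2 - 2 * (W - m) * W)) := by
      funext τ
      rw [hV]
      ring
    rw [e1, Ex_add, Ex_add, Ex_const_mul,
      Ex_const H p r hp_sum (i + 1) j (by omega) (by omega) h3,
      Ex_mean H p r hp_sum (j - (i + 1)) (i + 1) j s' (by omega) (by omega) h3]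
    unfold VarV
    ring
  simp only [key, mul_add]
  rw [Finset.sum_add_distrib]
  have hsig : sigmaSq p r i j s = ∑ s', p i s s' * (Vf p r (i + 1) j s' - m) ^ 2 := by
    rw [sigmaSq, if_pos hij]
  rw [hsig, add_comm]
  congr 1

lemma main_aux {S : Type*} [Fintype S] (H : ℕ) (p : ℕ → S → S → ℝ) (r : ℕ → S → ℝ)
    (hp_sum : ∀ t, 1 ≤ t → t ≤ H → ∀ s, ∑ s', p t s s' = 1) :
    ∀ n i j s, 1 ≤ i → i + n = j → j ≤ H →
      VarV p r i j s = ∑ t ∈ Finset.Icc i j, PC p i (t - 1) (sigmaSq p r t j) s := by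
  intro n
  induction n with
  | zero =>
    intro i j s h1 h2 h3
    have : i = j := by omega
    subst this
    rw [Finset.Icc_self, Finset.sum_singleton, PC_nil p i h1]
    rw [VarV, Ex_base]
    rw [show Vf p r i i = r i from by rw [Vf]; simp]
    simp [sigmaSq]
  | succ n IH =>
    intro i j s h1 h2 h3
    have hij : i < j := by omega
    rw [VarV_rec H p r hp_sum i j h1 hij h3 s]
    have hPop : Pop p i (VarV p r (i + 1) j) s
        = ∑ t ∈ Finset.Icc (i + 1) j, Pop p i (PC p (i + 1) (t - 1) (sigmaSq p r t j)) s := by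
      unfold Pop
      rw [Finset.sum_comm]
      refine Finset.sum_congr rfl fun s' _ => ?_
      rw [IH (i + 1) j s' (by omega) (by omega) h3, Finset.mul_sum]
    rw [hPop]
    have hPC : ∀ t ∈ Finset.Icc (i + 1) j,
        Pop p i (PC p (i + 1) (t - 1) (sigmaSq p r t j)) s
          = PC p i (t - 1) (sigmaSq p r t j) s := by
      intro t ht
      rw [Finset.mem_Icc] at ht
      rw [← PC_cons p i t (by omega)]
    rw [Finset.sum_congr rfl hPC]
    rw [Finset.Icc_add_one_left_eq_Ioc]
    conv_rhs => rw [← Finset.Ioc_insert_left (le_of_lt hij)]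
    rw [Finset.sum_insert (by simp), PC_nil p i h1]

/-- The variance of the value function equals the propagated sum of local variances. -/
theorem variance_eq_sum_propagated_local_variances
    {S : Type*} [Fintype S] [Nonempty S] (H : ℕ) (hH : 1 ≤ H)
    (r : ℕ → S → ℝ) (p : ℕ → S → S → ℝ)
    (hp_nonneg : ∀ t, 1 ≤ t → t ≤ H → ∀ s s', 0 ≤ p t s s')
    (hp_sum : ∀ t, 1 ≤ t → t ≤ H → ∀ s, ∑ s', p t s s' = 1)
    (i j : ℕ) (hi : 1 ≤ i) (hij : i ≤ j) (hj : j ≤ H) (s : S) :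
    VarV p r i j s = ∑ t ∈ Finset.Icc i j, PC p i (t - 1) (sigmaSq p r t j) s :=
  main_aux H p r hp_sum (j - i) i j s hi (by omega) hj
end

section
/- Assume all rewards are nonnegative (r_t(s) ≥ 0 for all t, s). Fix 1 ≤ i < j ≤ H, a state s ∈ S, an integer n ≥ 2, a real L > 0, and a subset N ⊆ S such that p_i(s,s') = 0 and p̃_i(s,s') = 0 for all s' ∉ N. Suppose that for every s' ∈ N there exists p̂(s') ∈ [0,1] with p_i(s,s') ∈ 𝒫(p̂(s'),n,L) and p̃_i(s,s') in the convex hull of 𝒫(p̂(s'),n,L). Then |((P_i − P̃_i) Ṽ_{i+1:j})(s)| ≤ (26·|N|·L/(3(n−1)))·‖Ṽ_{i+1:j}‖_∞ + √(8·|N|·L/n)·σ̃_{i:j}(s), where ‖f‖_∞ := max_{s'∈S} |f(s')|. -/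
open Finset

/-- The sup-norm `‖f‖_∞ = max_{s} |f s|` of a function on a finite nonempty type. -/
noncomputable def supNorm {S : Type*} [Fintype S] [Nonempty S] (f : S → ℝ) : ℝ :=
  Finset.univ.sup' Finset.univ_nonempty (fun s => |f s|)

/-- The confidence set `𝒫(p̂,n,L)` of transition probabilities. -/
def confSet (phat : ℝ) (n : ℕ) (L : ℝ) : Set ℝ :=
  {p' | 0 ≤ p' ∧ p' ≤ 1 ∧
    |Real.sqrt (p' * (1 - p')) - Real.sqrt (phat * (1 - phat))| ≤
      Real.sqrt (2 * L / ((n : ℝ) - 1)) ∧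
    |phat - p'| ≤ Real.sqrt (L / (2 * n)) ∧
    |phat - p'| ≤ Real.sqrt (2 * phat * (1 - phat) * L / n) + 7 * L / (3 * ((n : ℝ) - 1))}

lemma Vf_nonneg {S : Type*} [Fintype S] (q : ℕ → S → S → ℝ) (r : ℕ → S → ℝ)
    (hr : ∀ t, ∀ s : S, 0 ≤ r t s) :
    ∀ d i j, j - i ≤ d → (∀ t, i ≤ t → t < j → ∀ s s' : S, 0 ≤ q t s s') →
      ∀ s : S, 0 ≤ Vf q r i j s := by
  intro d
  induction d with
  | zero =>
    intro i j hd hq s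
    rw [Vf]
    have h : ¬ i < j := by omega
    simp only [h, dif_neg, not_false_iff]
    exact hr j s
  | succ d ih =>
    intro i j hd hq s
    rw [Vf]
    by_cases h : i < j
    · simp only [h, dif_pos]
      have h1 : 0 ≤ Pop q i (Vf q r (i + 1) j) s := by
        apply Finset.sum_nonneg
        intro s' _
        exact mul_nonneg (hq i le_rfl h s s')
          (ih (i + 1) j (by omega) (fun t ht1 ht2 => hq t (by omega) ht2) s')
      exact add_nonneg (hr i s) h1
    · simp only [h, dif_neg, not_false_iff]
      exact hr j s

lemma hull_subset {phat : ℝ} {n : ℕ} {L : ℝ} (hn : 2 ≤ n) (hL : 0 < L) :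
    convexHull ℝ (confSet phat n L) ⊆
      {x : ℝ | 0 ≤ x ∧ x ≤ 1 ∧
        Real.sqrt (phat * (1 - phat)) - Real.sqrt (2 * L / ((n : ℝ) - 1)) ≤
          Real.sqrt (x * (1 - x)) ∧
        |phat - x| ≤ Real.sqrt (2 * phat * (1 - phat) * L / n) + 7 * L / (3 * ((n : ℝ) - 1))} := by
  apply convexHull_min
  · rintro x ⟨h0, h1, h2, _h3, h4⟩
    exact ⟨h0, h1, by linarith [(abs_le.mp h2).1], h4⟩
  · intro x hx y hy a b ha hb hab
    obtain ⟨hx0, hx1, hx2, hx3⟩ := hx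
    obtain ⟨hy0, hy1, hy2, hy3⟩ := hy
    simp only [smul_eq_mul, Set.mem_setOf_eq]
    have hB0 : (0:ℝ) ≤ Real.sqrt (2 * phat * (1 - phat) * L / n) + 7 * L / (3 * ((n : ℝ) - 1)) :=
      le_trans (abs_nonneg _) hx3
    refine ⟨add_nonneg (mul_nonneg ha hx0) (mul_nonneg hb hy0), by nlinarith, ?_, ?_⟩
    · set c := Real.sqrt (phat * (1 - phat)) - Real.sqrt (2 * L / ((n : ℝ) - 1)) with hcdef
      by_cases hc : c ≤ 0
      · exact le_trans hc (Real.sqrt_nonneg _)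
      · push_neg at hc
        have hx2' : c ^ 2 ≤ x * (1 - x) := (Real.le_sqrt' hc).mp hx2
        have hy2' : c ^ 2 ≤ y * (1 - y) := (Real.le_sqrt' hc).mp hy2
        have hz : c ^ 2 ≤ (a * x + b * y) * (1 - (a * x + b * y)) := by
          have hid : (a * x + b * y) * (1 - (a * x + b * y)) =
              a * (x * (1 - x)) + b * (y * (1 - y)) + a * b * (x - y) ^ 2 := by
            linear_combination (-(a * x ^ 2 + b * y ^ 2)) * hab
          have h1 : a * c ^ 2 ≤ a * (x * (1 - x)) := mul_le_mul_of_nonneg_left hx2' ha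
          have h2 : b * c ^ 2 ≤ b * (y * (1 - y)) := mul_le_mul_of_nonneg_left hy2' hb
          have h3 : 0 ≤ a * b * (x - y) ^ 2 := mul_nonneg (mul_nonneg ha hb) (sq_nonneg _)
          have h4 : a * c ^ 2 + b * c ^ 2 = c ^ 2 := by linear_combination c ^ 2 * hab
          linarith
        exact (Real.le_sqrt' hc).mpr hz
    · have heq : phat - (a * x + b * y) = a * (phat - x) + b * (phat - y) := by
        linear_combination (-phat) * hab
      calc |phat - (a * x + b * y)| = |a * (phat - x) + b * (phat - y)| := by rw [heq]
        _ ≤ |a * (phat - x)| + |b * (phat - y)| := abs_add_le _ _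
        _ = a * |phat - x| + b * |phat - y| := by
            rw [abs_mul, abs_mul, abs_of_nonneg ha, abs_of_nonneg hb]
        _ ≤ a * (Real.sqrt (2 * phat * (1 - phat) * L / n) + 7 * L / (3 * ((n : ℝ) - 1)))
            + b * (Real.sqrt (2 * phat * (1 - phat) * L / n) + 7 * L / (3 * ((n : ℝ) - 1))) := by
            gcongr
        _ = _ := by rw [← add_mul, hab, one_mul]

/-- Bound on the difference of the expected optimistic value of successor states under
the true and the optimistic model, when both models lie in (the convex hull of) the
confidence set around a common empirical estimate. -/
theorem expected_value_difference_confidence_bound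
    {S : Type*} [Fintype S] [Nonempty S] (H : ℕ) (hH : 1 ≤ H)
    (r : ℕ → S → ℝ) (p q : ℕ → S → S → ℝ)
    (hr : ∀ t, ∀ s : S, 0 ≤ r t s)
    (hp_nonneg : ∀ t, 1 ≤ t → t ≤ H → ∀ s s', 0 ≤ p t s s')
    (hp_sum : ∀ t, 1 ≤ t → t ≤ H → ∀ s, ∑ s', p t s s' = 1)
    (hq_nonneg : ∀ t, 1 ≤ t → t ≤ H → ∀ s s', 0 ≤ q t s s')
    (hq_sum : ∀ t, 1 ≤ t → t ≤ H → ∀ s, ∑ s', q t s s' = 1)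
    (i j : ℕ) (hi : 1 ≤ i) (hij : i < j) (hj : j ≤ H) (s : S)
    (n : ℕ) (hn : 2 ≤ n) (L : ℝ) (hL : 0 < L)
    (N : Finset S)
    (hsupp : ∀ s' ∉ N, p i s s' = 0 ∧ q i s s' = 0)
    (hconf : ∀ s' ∈ N, ∃ phat : ℝ, 0 ≤ phat ∧ phat ≤ 1 ∧
      p i s s' ∈ confSet phat n L ∧ q i s s' ∈ convexHull ℝ (confSet phat n L)) :
    |Pop p i (Vf q r (i + 1) j) s - Pop q i (Vf q r (i + 1) j) s| ≤
      (26 * N.card * L / (3 * ((n : ℝ) - 1))) * supNorm (Vf q r (i + 1) j) +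
        Real.sqrt (8 * N.card * L / n) * Real.sqrt (sigmaSq q r i j s) := by
  have hm2 : (2:ℝ) ≤ (n:ℝ) := by exact_mod_cast hn
  have hm1 : (0:ℝ) < (n:ℝ) - 1 := by linarith
  have hm0 : (0:ℝ) < (n:ℝ) := by linarith
  have hiH : i ≤ H := le_trans (le_of_lt hij) hj
  set V := Vf q r (i + 1) j with hVdef
  set M := supNorm V with hMdef
  set mu := Pop q i V s with hmudef
  have hq_i : ∀ s' : S, 0 ≤ q i s s' := fun s' => hq_nonneg i hi hiH s s'
  have hV0 : ∀ s' : S, 0 ≤ V s' := fun s' =>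
    Vf_nonneg q r hr (j - (i + 1)) (i + 1) j le_rfl
      (fun t ht1 ht2 => hq_nonneg t (by omega) (by omega)) s'
  have hVM : ∀ s' : S, V s' ≤ M := fun s' =>
    le_trans (le_abs_self _) (Finset.le_sup' (fun x => |V x|) (Finset.mem_univ s'))
  have hM0 : 0 ≤ M := le_trans (hV0 (Classical.arbitrary S)) (hVM _)
  have hmu0 : 0 ≤ mu := Finset.sum_nonneg fun s' _ => mul_nonneg (hq_i s') (hV0 s')
  have hmuM : mu ≤ M := by
    calc mu = ∑ s', q i s s' * V s' := rfl
      _ ≤ ∑ s', q i s s' * M :=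
          Finset.sum_le_sum fun s' _ => mul_le_mul_of_nonneg_left (hVM s') (hq_i s')
      _ = M := by rw [← Finset.sum_mul, hq_sum i hi hiH s, one_mul]
  have habsV : ∀ s' : S, |V s' - mu| ≤ M := by
    intro s'
    rw [abs_le]
    constructor
    · linarith [hV0 s', hmuM]
    · linarith [hVM s', hmu0]
  have h26 : (0:ℝ) ≤ 26 * L / (3 * ((n:ℝ) - 1)) := by positivity
  -- key pointwise bound
  have hkey : ∀ s' ∈ N, |p i s s' - q i s s'| ≤
      2 * Real.sqrt (2 * L / n) * Real.sqrt (q i s s') + 26 * L / (3 * ((n:ℝ) - 1)) := by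
    intro s' hs'
    obtain ⟨phat, hph0, hph1, hpmem, hqmem⟩ := hconf s' hs'
    obtain ⟨hp0, hp1, hp2, hp3', hp4⟩ := hpmem
    obtain ⟨hq0, hq1, hq2, hq4⟩ := hull_subset hn hL hqmem
    have h1 : |p i s s' - q i s s'| ≤
        2 * (Real.sqrt (2 * phat * (1 - phat) * L / n) + 7 * L / (3 * ((n:ℝ) - 1))) := by
      have heq : p i s s' - q i s s' = (phat - q i s s') - (phat - p i s s') := by ring
      calc |p i s s' - q i s s'| = |(phat - q i s s') - (phat - p i s s')| := by rw [← heq]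
        _ ≤ |phat - q i s s'| + |phat - p i s s'| := abs_sub _ _
        _ ≤ _ := by linarith [hq4, hp4]
    have hsplit : Real.sqrt (2 * phat * (1 - phat) * L / n)
        = Real.sqrt (2 * L / n) * Real.sqrt (phat * (1 - phat)) := by
      have he : 2 * phat * (1 - phat) * L / (n:ℝ) = (2 * L / n) * (phat * (1 - phat)) := by
        ring
      rw [he, Real.sqrt_mul (by positivity)]
    have hc_le : Real.sqrt (phat * (1 - phat)) ≤
        Real.sqrt (q i s s' * (1 - q i s s')) + Real.sqrt (2 * L / ((n:ℝ) - 1)) := by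
      linarith [hq2]
    have hqq : Real.sqrt (q i s s' * (1 - q i s s')) ≤ Real.sqrt (q i s s') :=
      Real.sqrt_le_sqrt (by nlinarith)
    have hdd : Real.sqrt (2 * L / n) * Real.sqrt (2 * L / ((n:ℝ) - 1)) ≤ 2 * L / ((n:ℝ) - 1) := by
      rw [← Real.sqrt_mul (by positivity)]
      have h5 : (2 * L / (n:ℝ)) * (2 * L / ((n:ℝ) - 1))
          ≤ (2 * L / ((n:ℝ) - 1)) * (2 * L / ((n:ℝ) - 1)) := by
        apply mul_le_mul_of_nonneg_right _ (by positivity)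
        exact div_le_div_of_nonneg_left (by positivity) hm1 (by linarith)
      calc Real.sqrt ((2 * L / (n:ℝ)) * (2 * L / ((n:ℝ) - 1)))
          ≤ Real.sqrt ((2 * L / ((n:ℝ) - 1)) * (2 * L / ((n:ℝ) - 1))) := Real.sqrt_le_sqrt h5
        _ = 2 * L / ((n:ℝ) - 1) := Real.sqrt_mul_self (by positivity)
    have hB_le : Real.sqrt (2 * phat * (1 - phat) * L / n)
        ≤ Real.sqrt (2 * L / n) * Real.sqrt (q i s s') + 2 * L / ((n:ℝ) - 1) := by
      rw [hsplit]
      have hx := mul_le_mul_of_nonneg_left hc_le (Real.sqrt_nonneg (2 * L / (n:ℝ)))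
      rw [mul_add] at hx
      have h7 : Real.sqrt (2 * L / (n:ℝ)) * Real.sqrt (q i s s' * (1 - q i s s'))
          ≤ Real.sqrt (2 * L / (n:ℝ)) * Real.sqrt (q i s s') :=
        mul_le_mul_of_nonneg_left hqq (Real.sqrt_nonneg _)
      linarith
    have harith : 2 * (2 * L / ((n:ℝ) - 1)) + 2 * (7 * L / (3 * ((n:ℝ) - 1)))
        = 26 * L / (3 * ((n:ℝ) - 1)) := by
      field_simp
      ring
    linarith
  -- sum identities
  have hpsum : ∑ s' ∈ N, p i s s' = 1 :=
    (Finset.sum_subset (Finset.subset_univ N) fun x _ hx => (hsupp x hx).1).trans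
      (hp_sum i hi hiH s)
  have hqsum : ∑ s' ∈ N, q i s s' = 1 :=
    (Finset.sum_subset (Finset.subset_univ N) fun x _ hx => (hsupp x hx).2).trans
      (hq_sum i hi hiH s)
  have hPop_p : Pop p i V s = ∑ s' ∈ N, p i s s' * V s' :=
    (Finset.sum_subset (Finset.subset_univ N) fun x _ hx => by
      rw [(hsupp x hx).1, zero_mul]).symm
  have hPop_q : mu = ∑ s' ∈ N, q i s s' * V s' :=
    (Finset.sum_subset (Finset.subset_univ N) fun x _ hx => by
      rw [(hsupp x hx).2, zero_mul]).symm
  have hdiff : Pop p i V s - mu = ∑ s' ∈ N, (p i s s' - q i s s') * (V s' - mu) := by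
    have h1 : ∑ s' ∈ N, (p i s s' - q i s s') * (V s' - mu)
        = ∑ s' ∈ N, (p i s s' * V s' - q i s s' * V s' - (p i s s' - q i s s') * mu) :=
      Finset.sum_congr rfl fun s' _ => by ring
    rw [h1, Finset.sum_sub_distrib, Finset.sum_sub_distrib,
      ← Finset.sum_mul, Finset.sum_sub_distrib, hpsum, hqsum, hPop_p, hPop_q]
    ring
  have hsig : sigmaSq q r i j s = ∑ s', q i s s' * (V s' - mu) ^ 2 := by
    simp only [sigmaSq, if_pos hij]
    rfl
  have hsig0 : 0 ≤ ∑ s' ∈ N, q i s s' * (V s' - mu) ^ 2 :=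
    Finset.sum_nonneg fun s' _ => mul_nonneg (hq_i s') (sq_nonneg _)
  have hsub : ∑ s' ∈ N, q i s s' * (V s' - mu) ^ 2 ≤ sigmaSq q r i j s := by
    rw [hsig]
    exact Finset.sum_le_sum_of_subset_of_nonneg (Finset.subset_univ N)
      fun x _ _ => mul_nonneg (hq_i x) (sq_nonneg _)
  -- Cauchy-Schwarz
  have hCS : ∑ s' ∈ N, Real.sqrt (q i s s') * |V s' - mu|
      ≤ Real.sqrt (N.card) * Real.sqrt (∑ s' ∈ N, q i s s' * (V s' - mu) ^ 2) := by
    have hX0 : 0 ≤ ∑ s' ∈ N, Real.sqrt (q i s s') * |V s' - mu| :=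
      Finset.sum_nonneg fun s' _ => mul_nonneg (Real.sqrt_nonneg _) (abs_nonneg _)
    have hcs := Finset.sum_mul_sq_le_sq_mul_sq N (fun _ => (1:ℝ))
      (fun s' => Real.sqrt (q i s s') * |V s' - mu|)
    simp only [one_pow, one_mul, Finset.sum_const, nsmul_eq_mul, mul_one] at hcs
    have hsqc : ∑ s' ∈ N, (Real.sqrt (q i s s') * |V s' - mu|) ^ 2
        = ∑ s' ∈ N, q i s s' * (V s' - mu) ^ 2 :=
      Finset.sum_congr rfl fun s' _ => by
        rw [mul_pow, Real.sq_sqrt (hq_i s'), sq_abs]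
    rw [hsqc] at hcs
    calc ∑ s' ∈ N, Real.sqrt (q i s s') * |V s' - mu|
        = Real.sqrt ((∑ s' ∈ N, Real.sqrt (q i s s') * |V s' - mu|) ^ 2) :=
          (Real.sqrt_sq hX0).symm
      _ ≤ Real.sqrt ((N.card : ℝ) * ∑ s' ∈ N, q i s s' * (V s' - mu) ^ 2) :=
          Real.sqrt_le_sqrt hcs
      _ = Real.sqrt (N.card) * Real.sqrt (∑ s' ∈ N, q i s s' * (V s' - mu) ^ 2) :=
          Real.sqrt_mul (Nat.cast_nonneg _) _
  have h2eq : 2 * Real.sqrt (2 * L / n) * Real.sqrt (N.card)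
      = Real.sqrt (8 * N.card * L / n) := by
    have he : 8 * (N.card : ℝ) * L / n = 4 * ((2 * L / n) * (N.card : ℝ)) := by ring
    rw [he, Real.sqrt_mul (by norm_num : (0:ℝ) ≤ 4),
      Real.sqrt_mul (by positivity : (0:ℝ) ≤ 2 * L / (n:ℝ)),
      show Real.sqrt 4 = 2 by
        rw [show (4:ℝ) = 2 ^ 2 by norm_num, Real.sqrt_sq (by norm_num : (0:ℝ) ≤ 2)]]
    ring
  calc |Pop p i V s - mu|
      = |∑ s' ∈ N, (p i s s' - q i s s') * (V s' - mu)| := by rw [hdiff]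
    _ ≤ ∑ s' ∈ N, |(p i s s' - q i s s') * (V s' - mu)| := Finset.abs_sum_le_sum_abs _ _
    _ = ∑ s' ∈ N, |p i s s' - q i s s'| * |V s' - mu| := by simp_rw [abs_mul]
    _ ≤ ∑ s' ∈ N, (2 * Real.sqrt (2 * L / n) * Real.sqrt (q i s s')
          + 26 * L / (3 * ((n:ℝ) - 1))) * |V s' - mu| :=
        Finset.sum_le_sum fun s' hs' => mul_le_mul_of_nonneg_right (hkey s' hs') (abs_nonneg _)
    _ = 2 * Real.sqrt (2 * L / n) * (∑ s' ∈ N, Real.sqrt (q i s s') * |V s' - mu|)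
        + 26 * L / (3 * ((n:ℝ) - 1)) * (∑ s' ∈ N, |V s' - mu|) := by
        rw [Finset.mul_sum, Finset.mul_sum, ← Finset.sum_add_distrib]
        exact Finset.sum_congr rfl fun s' _ => by ring
    _ ≤ 2 * Real.sqrt (2 * L / n) * (Real.sqrt (N.card) * Real.sqrt (sigmaSq q r i j s))
        + 26 * L / (3 * ((n:ℝ) - 1)) * ((N.card : ℝ) * M) := by
        apply add_le_add
        · apply mul_le_mul_of_nonneg_left _ (by positivity)
          calc ∑ s' ∈ N, Real.sqrt (q i s s') * |V s' - mu|
              ≤ Real.sqrt (N.card) * Real.sqrt (∑ s' ∈ N, q i s s' * (V s' - mu) ^ 2) := hCS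
            _ ≤ Real.sqrt (N.card) * Real.sqrt (sigmaSq q r i j s) :=
              mul_le_mul_of_nonneg_left (Real.sqrt_le_sqrt hsub) (Real.sqrt_nonneg _)
        · apply mul_le_mul_of_nonneg_left _ h26
          calc ∑ s' ∈ N, |V s' - mu| ≤ ∑ s' ∈ N, M := Finset.sum_le_sum fun s' _ => habsV s'
            _ = (N.card : ℝ) * M := by rw [Finset.sum_const, nsmul_eq_mul]
    _ = (26 * N.card * L / (3 * ((n : ℝ) - 1))) * M
        + Real.sqrt (8 * N.card * L / n) * Real.sqrt (sigmaSq q r i j s) := by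
        rw [← h2eq]
        ring
end
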